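/- Let ι : U →L L²(μ, ℂ) be a continuous linear map, let θ, θ̃ ∈ X, and let E, Ẽ : W →L U be two-sided inverses of D(θ) and D(θ̃) with ‖E‖ ≤ M₁ and ‖Ẽ‖ ≤ M₂. Let f₁, …, f_J ∈ W (J ≥ 1), set u_j := E f_j, v_j := Ẽ f_j, and φ_j := −E((B u_j)(θ − θ̃)). Then the first-variable part of the covariance linearization error satisfies the quadratic bound ‖(1/J) Σ_{j=1}^{J} (ι((u_j − v_j) − φ_j)) ⊗ conj(ι u_j)‖_{L²(μ×μ)} ≤ ‖ι‖² · ‖B‖² · M₁³ · M₂ · ((1/J) Σ_{j=1}^{J} ‖f_j‖²_W) · ‖θ − θ̃‖²_X. -/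

import Mathlib

open MeasureTheory ComplexConjugate

private lemma tensor_eLpNorm {Ω : Type*} [MeasurableSpace Ω] (μ : Measure Ω) [SigmaFinite μ]
    (g h : Lp ℂ 2 μ) :
    eLpNorm (fun p : Ω × Ω => g p.1 * conj (h p.2)) 2 (μ.prod μ)
      = eLpNorm (⇑g) 2 μ * eLpNorm (⇑h) 2 μ := by
  have hg : AEMeasurable (fun x => (‖g x‖₊ : ENNReal) ^ (2:ℝ)) μ :=
    (ENNReal.continuous_rpow_const.measurable.comp_aemeasurable
      (Lp.aestronglyMeasurable g).enorm)
  have hh : AEMeasurable (fun x => (‖h x‖₊ : ENNReal) ^ (2:ℝ)) μ :=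
    (ENNReal.continuous_rpow_const.measurable.comp_aemeasurable
      (Lp.aestronglyMeasurable h).enorm)
  rw [eLpNorm_eq_lintegral_rpow_enorm_toReal two_ne_zero ENNReal.ofNat_ne_top,
      eLpNorm_eq_lintegral_rpow_enorm_toReal two_ne_zero ENNReal.ofNat_ne_top,
      eLpNorm_eq_lintegral_rpow_enorm_toReal two_ne_zero ENNReal.ofNat_ne_top]
  have h2 : (2 : ENNReal).toReal = (2:ℝ) := by simp
  rw [h2]
  have h1 : ∀ p : Ω × Ω, ((‖g p.1 * conj (h p.2)‖₊ : ENNReal)) ^ (2:ℝ) =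
      ((‖g p.1‖₊ : ENNReal) ^ (2:ℝ)) * ((‖h p.2‖₊ : ENNReal) ^ (2:ℝ)) := by
    intro p
    rw [nnnorm_mul, ENNReal.coe_mul,
        ENNReal.mul_rpow_of_nonneg _ _ (by norm_num : (0:ℝ) ≤ 2)]
    congr 2
    exact congrArg _ (RCLike.nnnorm_conj (K := ℂ) _)
  simp only [enorm_eq_nnnorm]
  simp_rw [h1]
  rw [lintegral_prod_mul hg hh,
      ENNReal.mul_rpow_of_nonneg _ _ (by norm_num : (0:ℝ) ≤ 1/2)]

/-- quadratic bound for the first-variable part of the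
covariance linearization error. -/
theorem statement13
    {Ω : Type*} [MeasurableSpace Ω] (μ : Measure Ω) [SigmaFinite μ]
    {X U W : Type*} [NormedAddCommGroup X] [NormedSpace ℂ X]
    [NormedAddCommGroup U] [NormedSpace ℂ U] [CompleteSpace U]
    [NormedAddCommGroup W] [NormedSpace ℂ W] [CompleteSpace W]
    (K : U →L[ℂ] W) (B : U →L[ℂ] X →L[ℂ] W)
    (D : X → U →L[ℂ] W) (hD : ∀ θ u, D θ u = K u + B u θ)
    (ι : U →L[ℂ] Lp ℂ 2 μ)
    (θ θ' : X) (E E' : W →L[ℂ] U)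
    (hE1 : E.comp (D θ) = ContinuousLinearMap.id ℂ U)
    (hE2 : (D θ).comp E = ContinuousLinearMap.id ℂ W)
    (hE1' : E'.comp (D θ') = ContinuousLinearMap.id ℂ U)
    (hE2' : (D θ').comp E' = ContinuousLinearMap.id ℂ W)
    (M₁ M₂ : ℝ) (hM1 : ‖E‖ ≤ M₁) (hM2 : ‖E'‖ ≤ M₂)
    (J : ℕ) (hJ : 1 ≤ J) (f : Fin J → W)
    (u v φ : Fin J → U)
    (hu : ∀ j, u j = E (f j)) (hv : ∀ j, v j = E' (f j))
    (hφ : ∀ j, φ j = -(E ((B (u j)) (θ - θ')))) :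
    eLpNorm (fun p : Ω × Ω =>
        (1 / (J : ℂ)) * ∑ j, ι ((u j - v j) - φ j) p.1 * conj (ι (u j) p.2))
      2 (μ.prod μ)
    ≤ ENNReal.ofReal (‖ι‖ ^ 2 * ‖B‖ ^ 2 * M₁ ^ 3 * M₂
        * ((1 / (J : ℝ)) * ∑ j, ‖f j‖ ^ 2) * ‖θ - θ'‖ ^ 2) := by
  set w : X := θ - θ' with hw
  have hM1' : (0:ℝ) ≤ M₁ := le_trans (norm_nonneg E) hM1
  have hM2' : (0:ℝ) ≤ M₂ := le_trans (norm_nonneg E') hM2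
  -- pointwise inverse identities
  have hED : ∀ x : U, E (D θ x) = x := by
    intro x
    have := ContinuousLinearMap.ext_iff.mp hE1 x
    simpa using this
  have hDE' : ∀ y : W, D θ' (E' y) = y := by
    intro y
    have := ContinuousLinearMap.ext_iff.mp hE2' y
    simpa using this
  have hDdiff : ∀ y : U, D θ' y - D θ y = -((B y) w) := by
    intro y
    rw [hD θ y, hD θ' y, hw, map_sub]
    abel
  have huv : ∀ j, u j - v j = -(E ((B (v j)) w)) := by
    intro j
    rw [hu, hv]
    have h1 : E (f j) - E' (f j) = E (f j) - E (D θ (E' (f j))) := by rw [hED]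
    rw [h1, ← map_sub]
    have h2 : f j - D θ (E' (f j)) = -((B (E' (f j))) w) := by
      calc f j - D θ (E' (f j)) = D θ' (E' (f j)) - D θ (E' (f j)) := by rw [hDE']
        _ = -((B (E' (f j))) w) := hDdiff _
    rw [h2, map_neg]
  have key : ∀ j, (u j - v j) - φ j = -(E ((B (E ((B (v j)) w))) w)) := by
    intro j
    have h3 := huv j
    have h4 : u j = v j - E ((B (v j)) w) := by
      rw [sub_eq_iff_eq_add] at h3
      rw [h3]; abel
    have h5 : E ((B (u j)) w) = E ((B (v j)) w) - E ((B (E ((B (v j)) w))) w) := by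
      rw [h4]
      simp [map_sub, ContinuousLinearMap.sub_apply]
    rw [hφ j, h3, h5]
    abel
  -- norm bounds
  have hE_app : ∀ (x : W) {c : ℝ}, ‖x‖ ≤ c → ‖E x‖ ≤ M₁ * c := by
    intro x c hc
    exact le_trans (E.le_opNorm x) (mul_le_mul hM1 hc (norm_nonneg x) hM1')
  have hB_app : ∀ (x : U) {c : ℝ}, ‖x‖ ≤ c → ‖(B x) w‖ ≤ ‖B‖ * c * ‖w‖ := by
    intro x c hc
    refine le_trans ((B x).le_opNorm w) (mul_le_mul_of_nonneg_right ?_ (norm_nonneg w))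
    exact le_trans (B.le_opNorm x) (mul_le_mul_of_nonneg_left hc (norm_nonneg B))
  have hvnorm : ∀ j, ‖v j‖ ≤ M₂ * ‖f j‖ := by
    intro j; rw [hv]
    exact le_trans (E'.le_opNorm _) (mul_le_mul_of_nonneg_right hM2 (norm_nonneg _))
  have hunorm : ∀ j, ‖u j‖ ≤ M₁ * ‖f j‖ := by
    intro j; rw [hu]
    exact le_trans (E.le_opNorm _) (mul_le_mul_of_nonneg_right hM1 (norm_nonneg _))
  have hanorm : ∀ j, ‖(u j - v j) - φ j‖ ≤ ‖B‖^2 * M₁^2 * M₂ * ‖w‖^2 * ‖f j‖ := by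
    intro j
    rw [key j, norm_neg]
    have c1 := hB_app _ (hvnorm j)
    have c2 := hE_app _ c1
    have c3 := hB_app _ c2
    have c4 := hE_app _ c3
    calc ‖E ((B (E ((B (v j)) w))) w)‖
        ≤ M₁ * (‖B‖ * (M₁ * (‖B‖ * (M₂ * ‖f j‖) * ‖w‖)) * ‖w‖) := c4
      _ = ‖B‖^2 * M₁^2 * M₂ * ‖w‖^2 * ‖f j‖ := by ring
  -- the functions
  set F : Fin J → (Ω × Ω) → ℂ :=
    fun j p => (ι ((u j - v j) - φ j)) p.1 * conj ((ι (u j)) p.2) with hF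
  have hfun : (fun p : Ω × Ω =>
      (1 / (J : ℂ)) * ∑ j, ι ((u j - v j) - φ j) p.1 * conj (ι (u j) p.2))
      = (1 / (J : ℂ)) • (∑ j, F j) := by
    funext p
    simp [hF, Finset.sum_apply, smul_eq_mul]
  rw [hfun, eLpNorm_const_smul]
  have hmeas : ∀ j ∈ (Finset.univ : Finset (Fin J)),
      AEStronglyMeasurable (F j) (μ.prod μ) := by
    intro j _
    have h1 : AEStronglyMeasurable (fun p : Ω × Ω => (ι ((u j - v j) - φ j)) p.1)
        (μ.prod μ) := (Lp.aestronglyMeasurable _).comp_fst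
    have h2 : AEStronglyMeasurable (fun p : Ω × Ω => conj ((ι (u j)) p.2))
        (μ.prod μ) :=
      continuous_star.comp_aestronglyMeasurable (Lp.aestronglyMeasurable (ι (u j))).comp_snd
    exact h1.mul h2
  have hLp : ∀ g : Lp ℂ 2 μ, eLpNorm (⇑g) 2 μ = ENNReal.ofReal ‖g‖ := by
    intro g
    rw [Lp.norm_def, ENNReal.ofReal_toReal (Lp.eLpNorm_ne_top g)]
  set c : ℝ := ‖ι‖^2 * ‖B‖^2 * M₁^3 * M₂ * ‖w‖^2 with hc
  have hterm : ∀ j, eLpNorm (F j) 2 (μ.prod μ) ≤ ENNReal.ofReal (c * ‖f j‖^2) := by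
    intro j
    rw [hF]
    rw [tensor_eLpNorm μ (ι ((u j - v j) - φ j)) (ι (u j)), hLp, hLp,
        ← ENNReal.ofReal_mul (norm_nonneg _)]
    refine ENNReal.ofReal_le_ofReal ?_
    have b1 : ‖ι ((u j - v j) - φ j)‖ ≤ ‖ι‖ * (‖B‖^2 * M₁^2 * M₂ * ‖w‖^2 * ‖f j‖) :=
      le_trans (ι.le_opNorm _) (mul_le_mul_of_nonneg_left (hanorm j) (norm_nonneg ι))
    have b2 : ‖ι (u j)‖ ≤ ‖ι‖ * (M₁ * ‖f j‖) :=
      le_trans (ι.le_opNorm _) (mul_le_mul_of_nonneg_left (hunorm j) (norm_nonneg ι))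
    calc ‖ι ((u j - v j) - φ j)‖ * ‖ι (u j)‖
        ≤ (‖ι‖ * (‖B‖^2 * M₁^2 * M₂ * ‖w‖^2 * ‖f j‖)) * (‖ι‖ * (M₁ * ‖f j‖)) := by
          refine mul_le_mul b1 b2 (norm_nonneg _) ?_
          have : (0:ℝ) ≤ ‖B‖^2 * M₁^2 * M₂ * ‖w‖^2 * ‖f j‖ := by positivity
          positivity
      _ = c * ‖f j‖^2 := by rw [hc]; ring
  have hsum : eLpNorm (∑ j, F j) 2 (μ.prod μ)
      ≤ ENNReal.ofReal (∑ j, c * ‖f j‖^2) := by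
    refine le_trans (eLpNorm_sum_le hmeas one_le_two) ?_
    rw [ENNReal.ofReal_sum_of_nonneg (fun j _ => by positivity)]
    exact Finset.sum_le_sum fun j _ => hterm j
  have hcoef : ((‖(1 / (J : ℂ))‖₊ : NNReal) : ENNReal) = ENNReal.ofReal (1 / (J:ℝ)) := by
    rw [← enorm_eq_nnnorm, ← ofReal_norm]
    congr 1
    rw [show (1 / (J : ℂ)) = (((1 / (J:ℝ)) : ℝ) : ℂ) by push_cast; ring]
    rw [Complex.norm_real]
    exact abs_of_nonneg (by positivity)
  calc (‖(1 / (J : ℂ))‖₊ : ENNReal) • eLpNorm (∑ j, F j) 2 (μ.prod μ)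
      ≤ (‖(1 / (J : ℂ))‖₊ : ENNReal) * ENNReal.ofReal (∑ j, c * ‖f j‖^2) := by
        rw [smul_eq_mul]
        exact mul_le_mul_right hsum _
    _ = ENNReal.ofReal ((1 / (J:ℝ)) * ∑ j, c * ‖f j‖^2) := by
        rw [hcoef, ← ENNReal.ofReal_mul (by positivity)]
    _ = ENNReal.ofReal (‖ι‖ ^ 2 * ‖B‖ ^ 2 * M₁ ^ 3 * M₂
        * ((1 / (J : ℝ)) * ∑ j, ‖f j‖ ^ 2) * ‖w‖ ^ 2) := by
        congr 1
        rw [hc, ← Finset.mul_sum]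
        ring
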